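/- arXiv:1107.5637 — 6 statements merged into one kernel-verified Lean document; each statement's English description precedes it below -/
import Mathlib

section
/- The partial mutual information function ι(c,b) (as defined from the four log terms) is convex on the rectangle F = [0,C] × [0,B]: for any (c',b'), (c'',b'') in F and θ ∈ [0,1], ι(θc'+(1−θ)c'', θb'+(1−θ)b'') ≤ θ·ι(c',b') + (1−θ)·ι(c'',b''). -/
open Real

/-- The two-output partial mutual information function. -/
noncomputable def iota (p₁ p₂ C B c b : ℝ) : ℝ :=
  c * Real.log (c / (c + b)) + b * Real.log (b / (c + b))
  + (C - c) * Real.log ((C - c) / ((C - c) + (B - b)))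
  + (B - b) * Real.log ((B - b) / ((C - c) + (B - b)))
  - C * Real.log p₁ - B * Real.log p₂

/-- The log-sum inequality for two terms. -/
lemma logsum (a b A B : ℝ) (ha : 0 ≤ a) (hb : 0 ≤ b) (haA : a ≤ A) (hbB : b ≤ B) :
    (a + b) * Real.log ((a + b) / (A + B)) ≤ a * Real.log (a / A) + b * Real.log (b / B) := by
  rcases eq_or_lt_of_le ha with rfl | ha
  · simp only [zero_add, zero_mul]
    rcases eq_or_lt_of_le hb with rfl | hb
    · simp
    · have hB : 0 < B := lt_of_lt_of_le hb hbB
      have hAB : 0 < A + B := by linarith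
      have h1 : b / (A + B) ≤ b / B := by
        apply div_le_div_of_nonneg_left (le_of_lt hb) hB; linarith
      gcongr
  rcases eq_or_lt_of_le hb with rfl | hb
  · simp only [add_zero, zero_mul]
    have hA : 0 < A := lt_of_lt_of_le ha haA
    have hAB : 0 < A + B := by linarith
    have h1 : a / (A + B) ≤ a / A := by
      apply div_le_div_of_nonneg_left (le_of_lt ha) hA; linarith
    gcongr
  · have hA : 0 < A := lt_of_lt_of_le ha haA
    have hB : 0 < B := lt_of_lt_of_le hb hbB
    have hAB : 0 < A + B := by linarith
    have key := Real.convexOn_mul_log.2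
      (show a / A ∈ Set.Ici (0:ℝ) from Set.mem_Ici.2 (by positivity))
      (show b / B ∈ Set.Ici (0:ℝ) from Set.mem_Ici.2 (by positivity))
      (show (0:ℝ) ≤ A / (A + B) by positivity)
      (show (0:ℝ) ≤ B / (A + B) by positivity)
      (show A / (A + B) + B / (A + B) = 1 by field_simp)
    simp only [smul_eq_mul] at key
    have e1 : A / (A + B) * (a / A) + B / (A + B) * (b / B) = (a + b) / (A + B) := by
      field_simp
    rw [e1] at key
    have h2 := mul_le_mul_of_nonneg_left key (le_of_lt hAB)
    calc (a + b) * Real.log ((a + b) / (A + B))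
        = (A + B) * ((a + b) / (A + B) * Real.log ((a + b) / (A + B))) := by
          field_simp
      _ ≤ (A + B) * (A / (A + B) * (a / A * Real.log (a / A)) + B / (A + B) * (b / B * Real.log (b / B))) := h2
      _ = a * Real.log (a / A) + b * Real.log (b / B) := by field_simp

/-- The basic building block of `iota`. -/
noncomputable def gfun (x y : ℝ) : ℝ := x * Real.log (x / (x + y)) + y * Real.log (y / (x + y))

lemma gfun_conv (x₁ y₁ x₂ y₂ θ : ℝ) (hx₁ : 0 ≤ x₁) (hy₁ : 0 ≤ y₁) (hx₂ : 0 ≤ x₂)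
    (hy₂ : 0 ≤ y₂) (hθ : 0 < θ) (hθ1 : θ < 1) :
    gfun (θ * x₁ + (1 - θ) * x₂) (θ * y₁ + (1 - θ) * y₂)
      ≤ θ * gfun x₁ y₁ + (1 - θ) * gfun x₂ y₂ := by
  have hθ' : (0:ℝ) < 1 - θ := by linarith
  have hθne : θ ≠ 0 := ne_of_gt hθ
  have hθ'ne : (1 - θ) ≠ 0 := ne_of_gt hθ'
  have hx := logsum (θ * x₁) ((1 - θ) * x₂) (θ * (x₁ + y₁)) ((1 - θ) * (x₂ + y₂))
    (by positivity) (by positivity) (by nlinarith) (by nlinarith)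
  have hy := logsum (θ * y₁) ((1 - θ) * y₂) (θ * (x₁ + y₁)) ((1 - θ) * (x₂ + y₂))
    (by positivity) (by positivity) (by nlinarith) (by nlinarith)
  have e1 : θ * x₁ / (θ * (x₁ + y₁)) = x₁ / (x₁ + y₁) := mul_div_mul_left _ _ hθne
  have e2 : (1 - θ) * x₂ / ((1 - θ) * (x₂ + y₂)) = x₂ / (x₂ + y₂) := mul_div_mul_left _ _ hθ'ne
  have e3 : θ * y₁ / (θ * (x₁ + y₁)) = y₁ / (x₁ + y₁) := mul_div_mul_left _ _ hθne
  have e4 : (1 - θ) * y₂ / ((1 - θ) * (x₂ + y₂)) = y₂ / (x₂ + y₂) := mul_div_mul_left _ _ hθ'ne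
  rw [e1, e2] at hx
  rw [e3, e4] at hy
  have ed : θ * (x₁ + y₁) + (1 - θ) * (x₂ + y₂)
      = (θ * x₁ + (1 - θ) * x₂) + (θ * y₁ + (1 - θ) * y₂) := by ring
  rw [ed] at hx hy
  simp only [gfun]
  nlinarith [hx, hy]

lemma iota_eq (p₁ p₂ C B c b : ℝ) :
    iota p₁ p₂ C B c b = gfun c b + gfun (C - c) (B - b) - C * Real.log p₁ - B * Real.log p₂ := by
  simp only [iota, gfun]; ring

/-- Convexity of the partial mutual information function on the rectangle
`F = [0,C] × [0,B]`. -/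
theorem iota_convex (p₁ p₂ C B : ℝ) (hC : 0 < C) (hC1 : C ≤ 1) (hB : 0 < B) (hB1 : B ≤ 1)
    (hp₁ : 0 < p₁) (hp₂ : 0 < p₂) (c' b' c'' b'' θ : ℝ)
    (hc' : 0 ≤ c') (hc'C : c' ≤ C) (hb' : 0 ≤ b') (hb'B : b' ≤ B)
    (hc'' : 0 ≤ c'') (hc''C : c'' ≤ C) (hb'' : 0 ≤ b'') (hb''B : b'' ≤ B)
    (hθ0 : 0 ≤ θ) (hθ1 : θ ≤ 1) :
    iota p₁ p₂ C B (θ * c' + (1 - θ) * c'') (θ * b' + (1 - θ) * b'')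
      ≤ θ * iota p₁ p₂ C B c' b' + (1 - θ) * iota p₁ p₂ C B c'' b'' := by
  rcases eq_or_lt_of_le hθ0 with rfl | hθ
  · norm_num
  rcases eq_or_lt_of_le hθ1 with rfl | hθ1'
  · norm_num
  have h1 := gfun_conv c' b' c'' b'' θ hc' hb' hc'' hb'' hθ hθ1'
  have h2 := gfun_conv (C - c') (B - b') (C - c'') (B - b'') θ
    (by linarith) (by linarith) (by linarith) (by linarith) hθ hθ1'
  have e1 : C - (θ * c' + (1 - θ) * c'') = θ * (C - c') + (1 - θ) * (C - c'') := by ring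
  have e2 : B - (θ * b' + (1 - θ) * b'') = θ * (B - b') + (1 - θ) * (B - b'') := by ring
  rw [iota_eq, iota_eq, iota_eq, e1, e2]
  nlinarith [h1, h2]
end

section
/- Equality in the convexity inequality for ι holds for distinct points (c',b') ≠ (c'',b'') and θ ∈ (0,1) if and only if c'/b' = c''/b'' = C/B. -/
open Real

noncomputable def Fent (x y : ℝ) : ℝ := x * Real.log (x / (x + y)) + y * Real.log (y / (x + y))

lemma Fent_zero : Fent 0 0 = 0 := by simp [Fent]

lemma Fent_smul (t x y : ℝ) (ht : 0 < t) : Fent (t*x) (t*y) = t * Fent x y := by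
  have h : t*x + t*y = t*(x+y) := by ring
  unfold Fent
  rw [h, mul_div_mul_left _ _ ht.ne', mul_div_mul_left _ _ ht.ne']
  ring

/-- two-term log-sum inequality with equality condition -/
lemma logsum_s9 (a1 a2 s1 s2 : ℝ) (ha1 : 0 ≤ a1) (ha2 : 0 ≤ a2) (hs1 : 0 < s1) (hs2 : 0 < s2) :
    (a1+a2)*Real.log ((a1+a2)/(s1+s2)) ≤ a1*Real.log (a1/s1) + a2*Real.log (a2/s2) ∧
    ((a1+a2)*Real.log ((a1+a2)/(s1+s2)) = a1*Real.log (a1/s1) + a2*Real.log (a2/s2) ↔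
      a1*s2 = a2*s1) := by
  have hs12 : 0 < s1 + s2 := by linarith
  by_cases hpq : a1*s2 = a2*s1
  · -- equality case: a1/s1 = a2/s2 = r
    have hr : a2 = (a1/s1) * s2 := by field_simp; linarith [hpq]
    have h1 : a1 = (a1/s1) * s1 := by field_simp
    constructor
    · apply le_of_eq
      rw [hr]
      have e1 : a1/s1 * s2 / s2 = a1/s1 := by field_simp; try ring
      have e2 : (a1 + a1/s1*s2)/(s1+s2) = a1/s1 := by field_simp; try ring
      rw [e1, e2]; ring
    · constructor
      · intro; exact hpq
      · intro _
        rw [hr]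
        have e1 : a1/s1 * s2 / s2 = a1/s1 := by field_simp; try ring
        have e2 : (a1 + a1/s1*s2)/(s1+s2) = a1/s1 := by field_simp; try ring
        rw [e1, e2]; ring
  · -- strict case via strict convexity of x log x
    have hmem1 : a1/s1 ∈ Set.Ici (0:ℝ) := Set.mem_Ici.2 (div_nonneg ha1 hs1.le)
    have hmem2 : a2/s2 ∈ Set.Ici (0:ℝ) := Set.mem_Ici.2 (div_nonneg ha2 hs2.le)
    have hne : a1/s1 ≠ a2/s2 := by
      intro h
      apply hpq
      field_simp at h
      linarith
    have hw1 : 0 < s1/(s1+s2) := div_pos hs1 hs12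
    have hw2 : 0 < s2/(s1+s2) := div_pos hs2 hs12
    have hw : s1/(s1+s2) + s2/(s1+s2) = 1 := by field_simp
    have := Real.strictConvexOn_mul_log.2 hmem1 hmem2 hne hw1 hw2 hw
    -- this : (w1*p + w2*q) * log (w1*p+w2*q) < w1*(p*log p) + w2*(q*log q)
    have key : (a1+a2)*Real.log ((a1+a2)/(s1+s2)) < a1*Real.log (a1/s1) + a2*Real.log (a2/s2) := by
      simp only [smul_eq_mul] at this
      have harg : s1/(s1+s2) * (a1/s1) + s2/(s1+s2) * (a2/s2) = (a1+a2)/(s1+s2) := by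
        field_simp; try ring
      rw [harg] at this
      have hmul := mul_lt_mul_of_pos_left this hs12
      have e0 : (s1+s2) * ((a1+a2)/(s1+s2) * Real.log ((a1+a2)/(s1+s2)))
          = (a1+a2)*Real.log ((a1+a2)/(s1+s2)) := by field_simp; try ring
      have e1 : (s1+s2) * (s1/(s1+s2) * (a1/s1 * Real.log (a1/s1)) + s2/(s1+s2) * (a2/s2 * Real.log (a2/s2)))
          = a1*Real.log (a1/s1) + a2*Real.log (a2/s2) := by field_simp; try ring
      calc (a1+a2)*Real.log ((a1+a2)/(s1+s2)) = _ := e0.symm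
        _ < _ := hmul
        _ = _ := e1
    exact ⟨key.le, by constructor <;> intro h <;> [exact absurd h key.ne; exact absurd h hpq]⟩

/-- superadditivity of Fent with equality condition -/
lemma Fent_superadd (a1 b1 a2 b2 : ℝ) (ha1 : 0 ≤ a1) (hb1 : 0 ≤ b1) (ha2 : 0 ≤ a2) (hb2 : 0 ≤ b2)
    (hs1 : 0 < a1 + b1) (hs2 : 0 < a2 + b2) :
    Fent (a1+a2) (b1+b2) ≤ Fent a1 b1 + Fent a2 b2 ∧
    (Fent (a1+a2) (b1+b2) = Fent a1 b1 + Fent a2 b2 ↔ a1*b2 = a2*b1) := by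
  obtain ⟨hA, hAiff⟩ := logsum_s9 a1 a2 (a1+b1) (a2+b2) ha1 ha2 hs1 hs2
  obtain ⟨hB, hBiff⟩ := logsum_s9 b1 b2 (a1+b1) (a2+b2) hb1 hb2 hs1 hs2
  have hsum : (a1+a2) + (b1+b2) = (a1+b1) + (a2+b2) := by ring
  have hF : Fent (a1+a2) (b1+b2)
      = (a1+a2)*Real.log ((a1+a2)/((a1+b1)+(a2+b2)))
        + (b1+b2)*Real.log ((b1+b2)/((a1+b1)+(a2+b2))) := by
    unfold Fent; rw [hsum]
  have hF1 : Fent a1 b1 = a1*Real.log (a1/(a1+b1)) + b1*Real.log (b1/(a1+b1)) := rfl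
  have hF2 : Fent a2 b2 = a2*Real.log (a2/(a2+b2)) + b2*Real.log (b2/(a2+b2)) := rfl
  constructor
  · rw [hF, hF1, hF2]; linarith
  · rw [hF, hF1, hF2]
    constructor
    · intro h
      -- both brackets are equalities
      have hAe : (a1+a2)*Real.log ((a1+a2)/((a1+b1)+(a2+b2))) = a1*Real.log (a1/(a1+b1)) + a2*Real.log (a2/(a2+b2)) := by linarith
      have := hAiff.1 hAe
      -- a1*(a2+b2) = a2*(a1+b1)
      nlinarith [this]
    · intro h
      have hA' : a1*(a2+b2) = a2*(a1+b1) := by nlinarith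
      have hB' : b1*(a2+b2) = b2*(a1+b1) := by nlinarith
      rw [hAiff.2 hA', hBiff.2 hB']; ring



/-- iota is constant on the ray c*B = C*b -/
lemma iota_const (p₁ p₂ C B : ℝ) (hC : 0 < C) (hB : 0 < B) (c b : ℝ)
    (hb : 0 < b) (hbB : b ≤ B) (hrel : c * B = C * b) :
    iota p₁ p₂ C B c b
      = C * Real.log (C/(C+B)) + B * Real.log (B/(C+B)) - C * Real.log p₁ - B * Real.log p₂ := by
  have hCB : 0 < C + B := by linarith
  have hcb : 0 < c + b := by nlinarith
  have hc : 0 < c := by nlinarith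
  have h1 : c/(c+b) = C/(C+B) := by rw [div_eq_div_iff hcb.ne' hCB.ne']; nlinarith
  have h2 : b/(c+b) = B/(C+B) := by rw [div_eq_div_iff hcb.ne' hCB.ne']; nlinarith
  have hrel2 : (C-c)*B = C*(B-b) := by ring_nf; nlinarith
  have h3 : (C-c) * Real.log ((C-c)/((C-c)+(B-b))) = (C-c) * Real.log (C/(C+B)) := by
    rcases eq_or_lt_of_le hbB with he | hlt
    · have hcC : c = C := by nlinarith [he]
      rw [hcC]; simp
    · have hBb : 0 < B - b := by linarith
      have hCc : 0 < C - c := by nlinarith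
      have hs : 0 < (C-c)+(B-b) := by linarith
      rw [show (C-c)/((C-c)+(B-b)) = C/(C+B) by rw [div_eq_div_iff hs.ne' hCB.ne']; nlinarith]
  have h4 : (B-b) * Real.log ((B-b)/((C-c)+(B-b))) = (B-b) * Real.log (B/(C+B)) := by
    rcases eq_or_lt_of_le hbB with he | hlt
    · rw [← he]; simp
    · have hBb : 0 < B - b := by linarith
      have hCc : 0 < C - c := by nlinarith
      have hs : 0 < (C-c)+(B-b) := by linarith
      rw [show (B-b)/((C-c)+(B-b)) = B/(C+B) by rw [div_eq_div_iff hs.ne' hCB.ne']; nlinarith]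
  unfold iota
  rw [h1, h2, h3, h4]; ring

/-- superadditivity without positivity of sums -/
lemma Fent_superadd' (a1 b1 a2 b2 : ℝ) (ha1 : 0 ≤ a1) (hb1 : 0 ≤ b1) (ha2 : 0 ≤ a2) (hb2 : 0 ≤ b2) :
    Fent (a1+a2) (b1+b2) ≤ Fent a1 b1 + Fent a2 b2 := by
  rcases eq_or_lt_of_le (by linarith : (0:ℝ) ≤ a1 + b1) with h1 | h1
  · have ha : a1 = 0 := by linarith
    have hb : b1 = 0 := by linarith
    simp [ha, hb, Fent_zero]
  · rcases eq_or_lt_of_le (by linarith : (0:ℝ) ≤ a2 + b2) with h2 | h2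
    · have ha : a2 = 0 := by linarith
      have hb : b2 = 0 := by linarith
      simp [ha, hb, Fent_zero]
    · exact (Fent_superadd a1 b1 a2 b2 ha1 hb1 ha2 hb2 h1 h2).1


/-- Equality in the convexity inequality for `ι`, for distinct points and `θ ∈ (0,1)`,
holds if and only if `c'/b' = c''/b'' = C/B`. -/
theorem iota_convex_eq_iff (p₁ p₂ C B : ℝ) (hC : 0 < C) (hC1 : C ≤ 1) (hB : 0 < B)
    (hB1 : B ≤ 1) (hp₁ : 0 < p₁) (hp₂ : 0 < p₂) (c' b' c'' b'' θ : ℝ)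
    (hc' : 0 ≤ c') (hc'C : c' ≤ C) (hb' : 0 < b') (hb'B : b' ≤ B)
    (hc'' : 0 ≤ c'') (hc''C : c'' ≤ C) (hb'' : 0 < b'') (hb''B : b'' ≤ B)
    (hne : (c', b') ≠ (c'', b'')) (hθ0 : 0 < θ) (hθ1 : θ < 1) :
    iota p₁ p₂ C B (θ * c' + (1 - θ) * c'') (θ * b' + (1 - θ) * b'')
        = θ * iota p₁ p₂ C B c' b' + (1 - θ) * iota p₁ p₂ C B c'' b''
      ↔ c' / b' = C / B ∧ c'' / b'' = C / B := by
  have ht : 0 < 1 - θ := by linarith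
  constructor
  · intro hE
    have hio : ∀ c b : ℝ, iota p₁ p₂ C B c b
        = Fent c b + Fent (C-c) (B-b) - C*Real.log p₁ - B*Real.log p₂ := by
      intro c b; unfold iota Fent; ring
    rw [hio, hio, hio] at hE
    have hc2 : C - (θ * c' + (1 - θ) * c'') = θ*(C-c') + (1-θ)*(C-c'') := by ring
    have hb2 : B - (θ * b' + (1 - θ) * b'') = θ*(B-b') + (1-θ)*(B-b'') := by ring
    rw [hc2, hb2] at hE
    have e1 := Fent_smul θ c' b' hθ0
    have e2 := Fent_smul (1-θ) c'' b'' ht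
    have e3 := Fent_smul θ (C-c') (B-b') hθ0
    have e4 := Fent_smul (1-θ) (C-c'') (B-b'') ht
    have key : Fent (θ*c' + (1-θ)*c'') (θ*b' + (1-θ)*b'')
        + Fent (θ*(C-c') + (1-θ)*(C-c'')) (θ*(B-b') + (1-θ)*(B-b''))
        = (Fent (θ*c') (θ*b') + Fent ((1-θ)*c'') ((1-θ)*b''))
        + (Fent (θ*(C-c')) (θ*(B-b')) + Fent ((1-θ)*(C-c'')) ((1-θ)*(B-b''))) := by
      linarith [hE, e1, e2, e3, e4]
    have hsAD1 := Fent_superadd (θ*c') (θ*b') ((1-θ)*c'') ((1-θ)*b'')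
      (by positivity) (by positivity) (by positivity) (by positivity)
      (by have := mul_pos hθ0 hb'; positivity)
      (by have := mul_pos ht hb''; positivity)
    have hD2le := Fent_superadd' (θ*(C-c')) (θ*(B-b')) ((1-θ)*(C-c'')) ((1-θ)*(B-b''))
      (mul_nonneg hθ0.le (by linarith)) (mul_nonneg hθ0.le (by linarith))
      (mul_nonneg ht.le (by linarith)) (mul_nonneg ht.le (by linarith))
    have hD1eq : Fent (θ*c' + (1-θ)*c'') (θ*b' + (1-θ)*b'')
        = Fent (θ*c') (θ*b') + Fent ((1-θ)*c'') ((1-θ)*b'') := by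
      linarith [hsAD1.1, hD2le, key]
    have prop1 := hsAD1.2.1 hD1eq
    have hθθ : θ*(1-θ) ≠ 0 := (mul_pos hθ0 ht).ne'
    have r1 : c' * b'' = c'' * b' := by
      apply mul_left_cancel₀ hθθ
      linear_combination prop1
    rcases eq_or_lt_of_le (by linarith : (0:ℝ) ≤ (C-c') + (B-b')) with hdeg1 | hpos1
    · -- c' = C, b' = B
      have hcC : c' = C := by linarith
      have hbB : b' = B := by linarith
      refine ⟨by rw [hcC, hbB], ?_⟩
      rw [div_eq_div_iff hb''.ne' hB.ne']
      linear_combination -r1 + b''*hcC - c''*hbB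
    · rcases eq_or_lt_of_le (by linarith : (0:ℝ) ≤ (C-c'') + (B-b'')) with hdeg2 | hpos2
      · have hcC : c'' = C := by linarith
        have hbB : b'' = B := by linarith
        refine ⟨?_, by rw [hcC, hbB]⟩
        rw [div_eq_div_iff hb'.ne' hB.ne']
        linear_combination r1 + b'*hcC - c'*hbB
      · have hD2eq : Fent (θ*(C-c') + (1-θ)*(C-c'')) (θ*(B-b') + (1-θ)*(B-b''))
            = Fent (θ*(C-c')) (θ*(B-b')) + Fent ((1-θ)*(C-c'')) ((1-θ)*(B-b'')) := by
          linarith [hsAD1.1, hD2le, key]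
        have hsAD2 := Fent_superadd (θ*(C-c')) (θ*(B-b')) ((1-θ)*(C-c'')) ((1-θ)*(B-b''))
          (mul_nonneg hθ0.le (by linarith)) (mul_nonneg hθ0.le (by linarith))
          (mul_nonneg ht.le (by linarith)) (mul_nonneg ht.le (by linarith))
          (by have : θ*(C-c') + θ*(B-b') = θ*((C-c')+(B-b')) := by ring
              rw [this]; exact mul_pos hθ0 hpos1)
          (by have : (1-θ)*(C-c'') + (1-θ)*(B-b'') = (1-θ)*((C-c'')+(B-b'')) := by ring
              rw [this]; exact mul_pos ht hpos2)
        have prop2 := hsAD2.2.1 hD2eq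
        have r2 : (C-c') * (B-b'') = (C-c'') * (B-b') := by
          apply mul_left_cancel₀ hθθ
          linear_combination prop2
        by_cases hbe : b' = b''
        · exfalso
          have hce : c' = c'' := by
            apply mul_right_cancel₀ hb''.ne'
            rw [r1, hbe]
          exact hne (by rw [hce, hbe])
        · have hbne : b'' - b' ≠ 0 := sub_ne_zero_of_ne (Ne.symm hbe)
          have h5 : C*b'' - C*b' = B*c'' - B*c' := by linear_combination -r2 + r1
          have h6 : (C*b'' - B*c'')*(b''-b') = 0 := by linear_combination b''*h5 - B*r1
          have h7 : c''*B = C*b'' := by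
            rcases mul_eq_zero.1 h6 with h | h
            · linarith
            · exact absurd h hbne
          refine ⟨?_, by rw [div_eq_div_iff hb''.ne' hB.ne']; linarith⟩
          rw [div_eq_div_iff hb'.ne' hB.ne']
          have h8 : (c'*B - C*b')*b'' = 0 := by linear_combination B*r1 + b'*h7
          rcases mul_eq_zero.1 h8 with h | h
          · linarith
          · exact absurd h hb''.ne'
  · rintro ⟨h1, h2⟩
    have hr1 : c' * B = C * b' := by rwa [div_eq_div_iff hb'.ne' hB.ne'] at h1
    have hr2 : c'' * B = C * b'' := by rwa [div_eq_div_iff hb''.ne' hB.ne'] at h2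
    have hmb : 0 < θ * b' + (1-θ) * b'' :=
      add_pos (mul_pos hθ0 hb') (mul_pos ht hb'')
    have hmbB : θ * b' + (1-θ) * b'' ≤ B := by
      have u1 := mul_le_mul_of_nonneg_left hb'B hθ0.le
      have u2 := mul_le_mul_of_nonneg_left hb''B ht.le
      linarith
    have hmr : (θ * c' + (1-θ) * c'') * B = C * (θ * b' + (1-θ) * b'') := by
      linear_combination θ*hr1 + (1-θ)*hr2
    rw [iota_const p₁ p₂ C B hC hB _ _ hmb hmbB hmr,
      iota_const p₁ p₂ C B hC hB _ _ hb' hb'B hr1,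
      iota_const p₁ p₂ C B hC hB _ _ hb'' hb''B hr2]
    ring
end

section
/- For all (c,b) in [0,C] × [0,B], ι(c,b) ≥ C·log(C/(C+B)) + B·log(B/(C+B)) − C·log p₁ − B·log p₂, with equality if and only if c/C = b/B. -/
open Real

/-- Two-term log-sum inequality with equality condition. -/
lemma logsum2 (a b x y : ℝ) (ha : 0 ≤ a) (hb : 0 ≤ b) (hx : 0 < x) (hy : 0 < y) :
    ((a + b) * Real.log ((a + b) / (x + y)) ≤ a * Real.log (a / x) + b * Real.log (b / y))
    ∧ ((a + b) * Real.log ((a + b) / (x + y)) = a * Real.log (a / x) + b * Real.log (b / y)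
        ↔ a / x = b / y) := by
  have hxy : 0 < x + y := by linarith
  set f : ℝ → ℝ := fun t => t * Real.log t with hf
  have hu : a / x ∈ Set.Ici (0:ℝ) := Set.mem_Ici.2 (div_nonneg ha hx.le)
  have hv : b / y ∈ Set.Ici (0:ℝ) := Set.mem_Ici.2 (div_nonneg hb hy.le)
  have hl : 0 < x / (x + y) := div_pos hx hxy
  have hm : 0 < y / (x + y) := div_pos hy hxy
  have hlm : x / (x + y) + y / (x + y) = 1 := by field_simp
  have hcomb : (x / (x + y)) • (a / x) + (y / (x + y)) • (b / y) = (a + b) / (x + y) := by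
    simp only [smul_eq_mul]
    field_simp
  have hmain : f ((a + b) / (x + y)) ≤ (x / (x + y)) * f (a / x) + (y / (x + y)) * f (b / y) := by
    have := Real.convexOn_mul_log.2 hu hv hl.le hm.le hlm
    rw [hcomb] at this
    simpa using this
  have hL : (x + y) * f ((a + b) / (x + y)) = (a + b) * Real.log ((a + b) / (x + y)) := by
    simp only [hf]
    field_simp
  have hR1 : (x + y) * ((x / (x + y)) * f (a / x)) = a * Real.log (a / x) := by
    simp only [hf]; field_simp
  have hR2 : (x + y) * ((y / (x + y)) * f (b / y)) = b * Real.log (b / y) := by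
    simp only [hf]; field_simp
  constructor
  · have := mul_le_mul_of_nonneg_left hmain hxy.le
    rw [mul_add, hR1, hR2, hL] at this
    exact this
  · constructor
    · intro heq
      by_contra hne
      have hst := Real.strictConvexOn_mul_log.2 hu hv hne hl hm hlm
      rw [hcomb] at hst
      have h2 : f ((a + b) / (x + y)) < (x / (x + y)) * f (a / x) + (y / (x + y)) * f (b / y) := by
        simpa using hst
      have := mul_lt_mul_of_pos_left h2 hxy
      rw [mul_add, hR1, hR2, hL] at this
      linarith [heq, this]
    · intro heq
      -- a / x = b / y = (a+b)/(x+y)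
      have h3 : (a + b) / (x + y) = a / x := by
        rw [div_eq_div_iff hxy.ne' hx.ne']
        rw [div_eq_div_iff hx.ne' hy.ne'] at heq
        ring_nf
        nlinarith [heq]
      rw [h3, heq]
      rw [← heq]
      have ea : a * Real.log (a / x) = x * ((a/x) * Real.log (a/x)) := by field_simp
      have eb : b * Real.log (a / x) = y * ((b/y) * Real.log (b/y)) := by
        rw [heq]; field_simp
      nlinarith [ea, eb, heq]
/-- Lower bound on the partial mutual information over the rectangle `[0,C] × [0,B]`,
with equality if and only if `c/C = b/B`. -/
theorem iota_lower_bound (p₁ p₂ C B : ℝ) (hC : 0 < C) (hC1 : C ≤ 1) (hB : 0 < B)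
    (hB1 : B ≤ 1) (hp₁ : 0 < p₁) (hp₂ : 0 < p₂) (c b : ℝ)
    (hc0 : 0 ≤ c) (hcC : c ≤ C) (hb0 : 0 ≤ b) (hbB : b ≤ B) :
    (C * Real.log (C / (C + B)) + B * Real.log (B / (C + B))
        - C * Real.log p₁ - B * Real.log p₂ ≤ iota p₁ p₂ C B c b)
    ∧ (iota p₁ p₂ C B c b
        = C * Real.log (C / (C + B)) + B * Real.log (B / (C + B))
          - C * Real.log p₁ - B * Real.log p₂ ↔ c / C = b / B) := by
  rcases eq_or_lt_of_le (by linarith : (0:ℝ) ≤ c + b) with hs | hs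
  · -- c = b = 0
    have hc : c = 0 := by linarith
    have hb : b = 0 := by linarith
    subst hc hb
    simp only [iota, zero_mul, sub_zero, add_zero, zero_add, zero_div, zero_mul]
    constructor
    · exact le_of_eq (by ring)
    · simp
  rcases eq_or_lt_of_le (by linarith : (0:ℝ) ≤ (C - c) + (B - b)) with ht | ht
  · -- c = C, b = B
    have hc : c = C := by linarith
    have hb : b = B := by linarith
    subst hc hb
    simp only [iota, sub_self, zero_mul, add_zero]
    constructor
    · norm_num
    · constructor
      · intro _
        rw [div_self (by linarith : (c:ℝ) ≠ 0), div_self (by linarith : (b:ℝ) ≠ 0)]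
      · intro _; trivial
  · have h1 := logsum2 c (C - c) (c + b) ((C - c) + (B - b)) hc0 (by linarith) hs ht
    have h2 := logsum2 b (B - b) (c + b) ((C - c) + (B - b)) hb0 (by linarith) hs ht
    have e1 : c + (C - c) = C := by ring
    have e1' : b + (B - b) = B := by ring
    have e2 : (c + b) + ((C - c) + (B - b)) = C + B := by ring
    rw [e1, e2] at h1
    rw [e1', e2] at h2
    simp only [iota]
    constructor
    · linarith [h1.1, h2.1]
    · constructor
      · intro heq
        have hq1 : C * Real.log (C / (C + B))
            = c * Real.log (c / (c + b)) + (C - c) * Real.log ((C - c) / ((C - c) + (B - b))) := by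
          linarith [h1.1, h2.1]
        have := h1.2.mp hq1
        rw [div_eq_div_iff hs.ne' ht.ne'] at this
        rw [div_eq_div_iff hC.ne' hB.ne']
        nlinarith [this]
      · intro hr
        rw [div_eq_div_iff hC.ne' hB.ne'] at hr
        have hq1 := h1.2.mpr (by rw [div_eq_div_iff hs.ne' ht.ne']; nlinarith [hr])
        have hq2 := h2.2.mpr (by rw [div_eq_div_iff hs.ne' ht.ne']; nlinarith [hr])
        linarith [hq1, hq2]
end

section
/- For I' = 3 channel outputs with c₁/b₁ < c₂/b₂ < c₃/b₃ (all cᵢ, bᵢ > 0), the odd-even assignment grouping outputs {1,3} versus {2} yields strictly smaller partial mutual information than the better of the two consecutive assignments: ι(c₂,b₂) < max( ι(c₁,b₁), ι(c₃,b₃) ). -/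
open Real

/-- Partial mutual information of a two-set assignment with totals `C`, `B`
(without the constant input-distribution terms). -/
noncomputable def iota0 (C B c b : ℝ) : ℝ :=
  c * Real.log (c / (c + b)) + b * Real.log (b / (c + b))
  + (C - c) * Real.log ((C - c) / ((C - c) + (B - b)))
  + (B - b) * Real.log ((B - b) / ((C - c) + (B - b)))

noncomputable def d2 (x y : ℝ) : ℝ :=
  x * Real.log (x / y) + (1 - x) * Real.log ((1 - x) / (1 - y))

lemma d2_hasDerivAt {x y : ℝ} (hx0 : 0 < x) (hx1 : x < 1) (hy0 : 0 < y) (hy1 : y < 1) :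
    HasDerivAt (d2 x) ((y - x) / (y * (1 - y))) y := by
  have hy1' : (0:ℝ) < 1 - y := by linarith
  have hx1' : (0:ℝ) < 1 - x := by linarith
  have h1 : HasDerivAt (fun y : ℝ => x / y) (x * -(y ^ 2)⁻¹) y :=
    (hasDerivAt_inv hy0.ne').const_mul x
  have h2 : HasDerivAt (fun y : ℝ => 1 - y) (-1) y := by
    simpa using (hasDerivAt_id y).const_sub 1
  have h3 : HasDerivAt (fun y : ℝ => (1 - x) / (1 - y)) ((1-x) * (- -1 / (1-y) ^ 2)) y := by
    simpa [div_eq_mul_inv] using ((h2.inv hy1'.ne').const_mul (1-x))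
  have h4 := (h1.log (div_ne_zero hx0.ne' hy0.ne')).const_mul x
  have h5 := (h3.log (div_ne_zero hx1'.ne' hy1'.ne')).const_mul (1-x)
  have h := h4.add h5
  refine HasDerivAt.congr_deriv h ?_
  symm
  have e1 : y ≠ 0 := hy0.ne'
  have e2 : (1:ℝ) - y ≠ 0 := hy1'.ne'
  have e3 : x ≠ 0 := hx0.ne'
  have e4 : (1:ℝ) - x ≠ 0 := hx1'.ne'
  field_simp
  ring

lemma d2_self {x : ℝ} (hx0 : 0 < x) (hx1 : x < 1) : d2 x x = 0 := by
  have : (1:ℝ) - x ≠ 0 := by linarith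
  simp [d2, div_self hx0.ne', div_self this]

lemma d2_strictAntiOn {x : ℝ} (hx0 : 0 < x) (hx1 : x < 1) :
    StrictAntiOn (d2 x) (Set.Ioc 0 x) := by
  apply strictAntiOn_of_deriv_neg (convex_Ioc 0 x)
  · exact fun y hy =>
      (d2_hasDerivAt hx0 hx1 hy.1 (lt_of_le_of_lt hy.2 hx1)).continuousAt.continuousWithinAt
  · intro y hy
    rw [interior_Ioc] at hy
    rw [(d2_hasDerivAt hx0 hx1 hy.1 (hy.2.trans hx1)).deriv]
    apply div_neg_of_neg_of_pos
    · linarith [hy.2]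
    · have h1 : y < 1 := hy.2.trans hx1
      have := hy.1
      nlinarith

lemma d2_strictMonoOn {x : ℝ} (hx0 : 0 < x) (hx1 : x < 1) :
    StrictMonoOn (d2 x) (Set.Ico x 1) := by
  apply strictMonoOn_of_deriv_pos (convex_Ico x 1)
  · exact fun y hy =>
      (d2_hasDerivAt hx0 hx1 (hx0.trans_le hy.1) hy.2).continuousAt.continuousWithinAt
  · intro y hy
    rw [interior_Ico] at hy
    rw [(d2_hasDerivAt hx0 hx1 (hx0.trans hy.1) hy.2).deriv]
    apply div_pos
    · linarith [hy.1]
    · have := hx0.trans hy.1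
      nlinarith [hy.2]

lemma d2_nonneg {x y : ℝ} (hx0 : 0 < x) (hx1 : x < 1) (hy0 : 0 < y) (hy1 : y < 1) :
    0 ≤ d2 x y := by
  rcases lt_trichotomy y x with h | h | h
  · have := d2_strictAntiOn hx0 hx1 ⟨hy0, h.le⟩ ⟨hx0, le_refl x⟩ h
    rw [d2_self hx0 hx1] at this
    linarith
  · rw [h, d2_self hx0 hx1]
  · have := d2_strictMonoOn hx0 hx1 ⟨le_refl x, hx1⟩ ⟨h.le, hy1⟩ h
    rw [d2_self hx0 hx1] at this
    linarith

lemma d2_pos {x y : ℝ} (hx0 : 0 < x) (hx1 : x < 1) (hy0 : 0 < y) (hy1 : y < 1)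
    (hne : y ≠ x) : 0 < d2 x y := by
  rcases lt_or_gt_of_ne hne with h | h
  · have := d2_strictAntiOn hx0 hx1 ⟨hy0, h.le⟩ ⟨hx0, le_refl x⟩ h
    rw [d2_self hx0 hx1] at this; linarith
  · have := d2_strictMonoOn hx0 hx1 ⟨le_refl x, hx1⟩ ⟨h.le, hy1⟩ h
    rw [d2_self hx0 hx1] at this; linarith

lemma m_d2 {c b c' b' : ℝ} (hc : 0 < c) (hb : 0 < b) (hc' : 0 < c') (hb' : 0 < b') :
    (c + b) * d2 (c / (c + b)) (c' / (c' + b'))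
      = c * (Real.log c - Real.log (c + b) - Real.log c' + Real.log (c' + b'))
        + b * (Real.log b - Real.log (c + b) - Real.log b' + Real.log (c' + b')) := by
  have hm : (0:ℝ) < c + b := by linarith
  have hm' : (0:ℝ) < c' + b' := by linarith
  have h1 : 1 - c / (c + b) = b / (c + b) := by field_simp; ring
  have h1' : 1 - c' / (c' + b') = b' / (c' + b') := by field_simp; ring
  rw [d2, h1, h1', div_div_div_eq, div_div_div_eq,
    log_div (by positivity) (by positivity), log_mul (by positivity) (by positivity),
    log_mul (by positivity) (by positivity),
    log_div (by positivity) (by positivity), log_mul (by positivity) (by positivity),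
    log_mul (by positivity) (by positivity)]
  field_simp
  ring

lemma iota0_expand {c b c' b' : ℝ} (hc : 0 < c) (hb : 0 < b) (hc' : 0 < c') (hb' : 0 < b') :
    iota0 (c + c') (b + b') c b
      = c * (Real.log c - Real.log (c + b)) + b * (Real.log b - Real.log (c + b))
        + c' * (Real.log c' - Real.log (c' + b')) + b' * (Real.log b' - Real.log (c' + b')) := by
  have h1 : c + c' - c = c' := by ring
  have h2 : b + b' - b = b' := by ring
  rw [iota0, h1, h2, log_div hc.ne' (by positivity), log_div hb.ne' (by positivity),
    log_div hc'.ne' (by positivity), log_div hb'.ne' (by positivity)]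
  try ring

lemma key1 {c₁ b₁ c₂ b₂ c₃ b₃ : ℝ} (hc₁ : 0 < c₁) (hb₁ : 0 < b₁) (hc₂ : 0 < c₂)
    (hb₂ : 0 < b₂) (hc₃ : 0 < c₃) (hb₃ : 0 < b₃) :
    iota0 (c₁+c₂+c₃) (b₁+b₂+b₃) c₁ b₁ - iota0 (c₁+c₂+c₃) (b₁+b₂+b₃) c₂ b₂
      = (c₁+b₁) * d2 (c₁/(c₁+b₁)) ((c₁+c₃)/((c₁+c₃)+(b₁+b₃)))
        + (c₃+b₃) * d2 (c₃/(c₃+b₃)) ((c₁+c₃)/((c₁+c₃)+(b₁+b₃)))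
        + ((c₂+c₃)+(b₂+b₃)) * d2 ((c₂+c₃)/((c₂+c₃)+(b₂+b₃))) (c₂/(c₂+b₂))
        - (c₃+b₃) * d2 (c₃/(c₃+b₃)) (c₂/(c₂+b₂)) := by
  have e1 : iota0 (c₁+c₂+c₃) (b₁+b₂+b₃) c₁ b₁ = iota0 (c₁+(c₂+c₃)) (b₁+(b₂+b₃)) c₁ b₁ := by
    ring_nf
  have e2 : iota0 (c₁+c₂+c₃) (b₁+b₂+b₃) c₂ b₂ = iota0 (c₂+(c₁+c₃)) (b₂+(b₁+b₃)) c₂ b₂ := by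
    ring_nf
  rw [e1, e2, iota0_expand hc₁ hb₁ (by positivity) (by positivity),
    iota0_expand hc₂ hb₂ (by positivity) (by positivity),
    m_d2 hc₁ hb₁ (by positivity) (by positivity),
    m_d2 hc₃ hb₃ (by positivity) (by positivity),
    m_d2 (by positivity) (by positivity) hc₂ hb₂,
    m_d2 hc₃ hb₃ hc₂ hb₂]
  ring_nf

lemma key2 {c₁ b₁ c₂ b₂ c₃ b₃ : ℝ} (hc₁ : 0 < c₁) (hb₁ : 0 < b₁) (hc₂ : 0 < c₂)
    (hb₂ : 0 < b₂) (hc₃ : 0 < c₃) (hb₃ : 0 < b₃) :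
    iota0 (c₁+c₂+c₃) (b₁+b₂+b₃) c₃ b₃ - iota0 (c₁+c₂+c₃) (b₁+b₂+b₃) c₂ b₂
      = (c₁+b₁) * d2 (c₁/(c₁+b₁)) ((c₁+c₃)/((c₁+c₃)+(b₁+b₃)))
        + (c₃+b₃) * d2 (c₃/(c₃+b₃)) ((c₁+c₃)/((c₁+c₃)+(b₁+b₃)))
        + ((c₁+c₂)+(b₁+b₂)) * d2 ((c₁+c₂)/((c₁+c₂)+(b₁+b₂))) (c₂/(c₂+b₂))
        - (c₁+b₁) * d2 (c₁/(c₁+b₁)) (c₂/(c₂+b₂)) := by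
  have e1 : iota0 (c₁+c₂+c₃) (b₁+b₂+b₃) c₃ b₃ = iota0 (c₃+(c₁+c₂)) (b₃+(b₁+b₂)) c₃ b₃ := by
    ring_nf
  have e2 : iota0 (c₁+c₂+c₃) (b₁+b₂+b₃) c₂ b₂ = iota0 (c₂+(c₁+c₃)) (b₂+(b₁+b₃)) c₂ b₂ := by
    ring_nf
  rw [e1, e2, iota0_expand hc₃ hb₃ (by positivity) (by positivity),
    iota0_expand hc₂ hb₂ (by positivity) (by positivity),
    m_d2 hc₁ hb₁ (by positivity) (by positivity),
    m_d2 hc₃ hb₃ (by positivity) (by positivity),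
    m_d2 (by positivity) (by positivity) hc₂ hb₂,
    m_d2 hc₁ hb₁ hc₂ hb₂]
  ring_nf

set_option maxHeartbeats 1000000 in
/-- For `I' = 3` sorted outputs, the odd-even assignment `{1,3} | {2}` has strictly
smaller partial mutual information than the better of the two consecutive assignments:
`ι(c₂,b₂) < max (ι(c₁,b₁), ι(c₃,b₃))`. -/
theorem odd_even_three_suboptimal (c₁ b₁ c₂ b₂ c₃ b₃ : ℝ)
    (hc₁ : 0 < c₁) (hb₁ : 0 < b₁) (hc₂ : 0 < c₂) (hb₂ : 0 < b₂)
    (hc₃ : 0 < c₃) (hb₃ : 0 < b₃)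
    (h12 : c₁ / b₁ < c₂ / b₂) (h23 : c₂ / b₂ < c₃ / b₃) :
    iota0 (c₁ + c₂ + c₃) (b₁ + b₂ + b₃) c₂ b₂
      < max (iota0 (c₁ + c₂ + c₃) (b₁ + b₂ + b₃) c₁ b₁)
          (iota0 (c₁ + c₂ + c₃) (b₁ + b₂ + b₃) c₃ b₃) := by
  have h12' : c₁ * b₂ < c₂ * b₁ := (div_lt_div_iff₀ hb₁ hb₂).mp h12
  have h23' : c₂ * b₃ < c₃ * b₂ := (div_lt_div_iff₀ hb₂ hb₃).mp h23
  have h13' : c₁ * b₃ < c₃ * b₁ := (div_lt_div_iff₀ hb₁ hb₃).mp (h12.trans h23)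
  set t1 := c₁/(c₁+b₁) with ht1def
  set t2 := c₂/(c₂+b₂) with ht2def
  set t3 := c₃/(c₃+b₃) with ht3def
  set t13 := (c₁+c₃)/((c₁+c₃)+(b₁+b₃)) with ht13def
  set t23 := (c₂+c₃)/((c₂+c₃)+(b₂+b₃)) with ht23def
  set t12 := (c₁+c₂)/((c₁+c₂)+(b₁+b₂)) with ht12def
  have ht1p : 0 < t1 := by positivity
  have ht2p : 0 < t2 := by positivity
  have ht3p : 0 < t3 := by positivity
  have ht13p : 0 < t13 := by positivity
  have ht23p : 0 < t23 := by positivity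
  have ht12p : 0 < t12 := by positivity
  have ht1l : t1 < 1 := by rw [ht1def, div_lt_one (by positivity)]; linarith
  have ht2l : t2 < 1 := by rw [ht2def, div_lt_one (by positivity)]; linarith
  have ht3l : t3 < 1 := by rw [ht3def, div_lt_one (by positivity)]; linarith
  have ht13l : t13 < 1 := by rw [ht13def, div_lt_one (by positivity)]; linarith
  have ht23l : t23 < 1 := by rw [ht23def, div_lt_one (by positivity)]; linarith
  have ht12l : t12 < 1 := by rw [ht12def, div_lt_one (by positivity)]; linarith
  have h1lt2 : t1 < t2 := by
    rw [ht1def, ht2def, div_lt_div_iff₀ (by positivity) (by positivity)]; linarith [h12']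
  have h2lt3 : t2 < t3 := by
    rw [ht2def, ht3def, div_lt_div_iff₀ (by positivity) (by positivity)]; linarith [h23']
  have h1lt13 : t1 < t13 := by
    rw [ht1def, ht13def, div_lt_div_iff₀ (by positivity) (by positivity)]; linarith [h13']
  have h13lt3 : t13 < t3 := by
    rw [ht13def, ht3def, div_lt_div_iff₀ (by positivity) (by positivity)]; linarith [h13']
  have h2lt23 : t2 < t23 := by
    rw [ht2def, ht23def, div_lt_div_iff₀ (by positivity) (by positivity)]; linarith [h23']
  have h12lt2 : t12 < t2 := by
    rw [ht12def, ht2def, div_lt_div_iff₀ (by positivity) (by positivity)]; linarith [h12']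
  have m1p : (0:ℝ) < c₁+b₁ := by linarith
  have m3p : (0:ℝ) < c₃+b₃ := by linarith
  have m23p : (0:ℝ) < (c₂+c₃)+(b₂+b₃) := by linarith
  have m12p : (0:ℝ) < (c₁+c₂)+(b₁+b₂) := by linarith
  rcases le_total t13 t2 with hcase | hcase
  · -- iota0 ... c₂ b₂ < iota0 ... c₁ b₁
    rw [lt_max_iff]
    left
    have hk := key1 hc₁ hb₁ hc₂ hb₂ hc₃ hb₃
    rw [← ht1def, ← ht2def, ← ht3def, ← ht13def, ← ht23def] at hk
    have hA : 0 ≤ d2 t1 t13 := d2_nonneg ht1p ht1l ht13p ht13l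
    have hB : d2 t3 t2 ≤ d2 t3 t13 := by
      rcases eq_or_lt_of_le hcase with he | hl
      · rw [he]
      · exact (d2_strictAntiOn ht3p ht3l ⟨ht13p, h13lt3.le⟩ ⟨ht2p, h2lt3.le⟩ hl).le
    have hC : 0 < d2 t23 t2 := d2_pos ht23p ht23l ht2p ht2l h2lt23.ne
    have p1 : 0 ≤ (c₁+b₁) * d2 t1 t13 := mul_nonneg m1p.le hA
    have p2 : (c₃+b₃) * d2 t3 t2 ≤ (c₃+b₃) * d2 t3 t13 :=
      mul_le_mul_of_nonneg_left hB m3p.le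
    have p3 : 0 < ((c₂+c₃)+(b₂+b₃)) * d2 t23 t2 := mul_pos m23p hC
    linarith
  · rw [lt_max_iff]
    right
    have hk := key2 hc₁ hb₁ hc₂ hb₂ hc₃ hb₃
    rw [← ht1def, ← ht2def, ← ht3def, ← ht13def, ← ht12def] at hk
    have hA : 0 ≤ d2 t3 t13 := d2_nonneg ht3p ht3l ht13p ht13l
    have hB : d2 t1 t2 ≤ d2 t1 t13 := by
      rcases eq_or_lt_of_le hcase with he | hl
      · rw [← he]
      · exact (d2_strictMonoOn ht1p ht1l ⟨h1lt2.le, ht2l⟩ ⟨h1lt13.le, ht13l⟩ hl).le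
    have hC : 0 < d2 t12 t2 := d2_pos ht12p ht12l ht2p ht2l (ne_of_gt h12lt2)
    have p1 : 0 ≤ (c₃+b₃) * d2 t3 t13 := mul_nonneg m3p.le hA
    have p2 : (c₁+b₁) * d2 t1 t2 ≤ (c₁+b₁) * d2 t1 t13 :=
      mul_le_mul_of_nonneg_left hB m1p.le
    have p3 : 0 < ((c₁+c₂)+(b₁+b₂)) * d2 t12 t2 := mul_pos m12p hC
    linarith
end

section
/- For I' = 4 channel outputs with strictly increasing likelihood ratios cᵢ/bᵢ, the odd-even assignment {1,3} versus {2,4} has strictly smaller partial mutual information than at least one consecutive assignment: ι(c₁+c₃, b₁+b₃) < max( ι(c₁,b₁), ι(c₁+c₂, b₁+b₂), ι(c₁+c₂+c₃, b₁+b₂+b₃) ). -/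
open Real

lemma log_diff_le' (x y : ℝ) (hx : 0 < x) (hy : 0 < y) : Real.log x - Real.log y ≤ x / y - 1 := by
  have h := Real.log_le_sub_one_of_pos (div_pos hx hy)
  rwa [Real.log_div hx.ne' hy.ne'] at h

lemma log_diff_lt' (x y : ℝ) (hx : 0 < x) (hy : 0 < y) (hne : x ≠ y) :
    Real.log x - Real.log y < x / y - 1 := by
  have hxy : x / y ≠ 1 := by
    intro h
    exact hne (by field_simp at h; linarith)
  have h := Real.log_lt_sub_one_of_pos (div_pos hx hy) hxy
  rwa [Real.log_div hx.ne' hy.ne'] at h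

/-- Gibbs / cross-entropy inequality in unnormalized form. -/
lemma gibbs_le (u v c b : ℝ) (hu : 0 < u) (hv : 0 < v) (hc : 0 < c) (hb : 0 < b) :
    u * Real.log (c / (c + b)) + v * Real.log (b / (c + b))
      ≤ u * Real.log (u / (u + v)) + v * Real.log (v / (u + v)) := by
  have hcb : 0 < c + b := by linarith
  have huv : 0 < u + v := by linarith
  have h1 := log_diff_le' (c / (c + b)) (u / (u + v)) (by positivity) (by positivity)
  have h2 := log_diff_le' (b / (c + b)) (v / (u + v)) (by positivity) (by positivity)
  have key : u * ((c / (c + b)) / (u / (u + v)) - 1) + v * ((b / (c + b)) / (v / (u + v)) - 1) = 0 := by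
    field_simp
    ring
  nlinarith [mul_le_mul_of_nonneg_left h1 hu.le, mul_le_mul_of_nonneg_left h2 hv.le]

/-- Strict Gibbs inequality when the two ratios differ. -/
lemma gibbs_lt (u v c b : ℝ) (hu : 0 < u) (hv : 0 < v) (hc : 0 < c) (hb : 0 < b)
    (hne : u * b ≠ v * c) :
    u * Real.log (c / (c + b)) + v * Real.log (b / (c + b))
      < u * Real.log (u / (u + v)) + v * Real.log (v / (u + v)) := by
  have hcb : 0 < c + b := by linarith
  have huv : 0 < u + v := by linarith
  have hne' : c / (c + b) ≠ u / (u + v) := by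
    intro h
    rw [div_eq_div_iff hcb.ne' huv.ne'] at h
    apply hne
    nlinarith [h]
  have h1 := log_diff_lt' (c / (c + b)) (u / (u + v)) (by positivity) (by positivity) hne'
  have h2 := log_diff_le' (b / (c + b)) (v / (u + v)) (by positivity) (by positivity)
  have key : u * ((c / (c + b)) / (u / (u + v)) - 1) + v * ((b / (c + b)) / (v / (u + v)) - 1) = 0 := by
    field_simp
    ring
  nlinarith [mul_lt_mul_of_pos_left h1 hu, mul_le_mul_of_nonneg_left h2 hv.le]

/-- Purely algebraic core of the argument: case analysis on the preference
scores of outputs 2 and 3. -/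
lemma core_alg (c₁ b₁ c₂ b₂ c₃ b₃ c₄ b₄ L1 L2 M1 M2 Q P1 P2 P3 : ℝ)
    (hb₁ : 0 < b₁) (hb₂ : 0 < b₂) (hb₃ : 0 < b₃) (hb₄ : 0 < b₄)
    (k12 : c₁ * b₂ < c₂ * b₁) (k23 : c₂ * b₃ < c₃ * b₂) (k34 : c₃ * b₄ < c₄ * b₃)
    (hQ : Q = (c₁+c₃) * L1 + (b₁+b₃) * L2 + ((c₂+c₄) * M1 + (b₂+b₄) * M2))
    (H1 : c₁ * L1 + b₁ * L2 + ((c₂+c₃+c₄) * M1 + (b₂+b₃+b₄) * M2) < P1)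
    (H2 : (c₁+c₂) * M1 + (b₁+b₂) * M2 + ((c₃+c₄) * L1 + (b₃+b₄) * L2) ≤ P2)
    (H3 : (c₁+c₂+c₃) * L1 + (b₁+b₂+b₃) * L2 + (c₄ * M1 + b₄ * M2) < P3) :
    Q < max P1 (max P2 P3) := by
  by_cases hs3 : c₃ * L1 + b₃ * L2 ≤ c₃ * M1 + b₃ * M2
  · exact lt_max_iff.mpr (Or.inl (by nlinarith))
  push_neg at hs3
  by_cases hs2 : c₂ * M1 + b₂ * M2 ≤ c₂ * L1 + b₂ * L2
  · exact lt_max_iff.mpr (Or.inr (lt_max_iff.mpr (Or.inr (by nlinarith))))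
  push_neg at hs2
  have hA : 0 < (L1 - M1) * (c₃ * b₂ - c₂ * b₃) := by
    nlinarith [mul_lt_mul_of_pos_left hs3 hb₂, mul_lt_mul_of_pos_left hs2 hb₃]
  have hApos : 0 < L1 - M1 := by
    rcases mul_pos_iff.mp hA with ⟨h, _⟩ | ⟨_, h2⟩
    · exact h
    · nlinarith
  have hs4 : 0 < c₄ * L1 + b₄ * L2 - (c₄ * M1 + b₄ * M2) := by
    nlinarith [mul_pos hApos (show (0:ℝ) < c₄ * b₃ - c₃ * b₄ by linarith),
      mul_lt_mul_of_pos_left hs3 hb₄, hb₃]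
  have hs1 : c₁ * L1 + b₁ * L2 - (c₁ * M1 + b₁ * M2) < 0 := by
    nlinarith [mul_pos hApos (show (0:ℝ) < c₂ * b₁ - c₁ * b₂ by linarith),
      mul_lt_mul_of_pos_left hs2 hb₁, hb₂]
  exact lt_max_iff.mpr (Or.inr (lt_max_iff.mpr (Or.inl (by nlinarith))))

set_option maxHeartbeats 1000000 in
/-- For `I' = 4` sorted outputs, the odd-even assignment `{1,3} | {2,4}` has strictly
smaller partial mutual information than at least one consecutive assignment. -/
theorem odd_even_four_suboptimal (c₁ b₁ c₂ b₂ c₃ b₃ c₄ b₄ : ℝ)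
    (hc₁ : 0 < c₁) (hb₁ : 0 < b₁) (hc₂ : 0 < c₂) (hb₂ : 0 < b₂)
    (hc₃ : 0 < c₃) (hb₃ : 0 < b₃) (hc₄ : 0 < c₄) (hb₄ : 0 < b₄)
    (h12 : c₁ / b₁ < c₂ / b₂) (h23 : c₂ / b₂ < c₃ / b₃) (h34 : c₃ / b₃ < c₄ / b₄) :
    iota0 (c₁ + c₂ + c₃ + c₄) (b₁ + b₂ + b₃ + b₄) (c₁ + c₃) (b₁ + b₃)
      < max (iota0 (c₁ + c₂ + c₃ + c₄) (b₁ + b₂ + b₃ + b₄) c₁ b₁)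
          (max (iota0 (c₁ + c₂ + c₃ + c₄) (b₁ + b₂ + b₃ + b₄) (c₁ + c₂) (b₁ + b₂))
            (iota0 (c₁ + c₂ + c₃ + c₄) (b₁ + b₂ + b₃ + b₄)
              (c₁ + c₂ + c₃) (b₁ + b₂ + b₃))) := by
  have k12 : c₁ * b₂ < c₂ * b₁ := (div_lt_div_iff₀ hb₁ hb₂).mp h12
  have k23 : c₂ * b₃ < c₃ * b₂ := (div_lt_div_iff₀ hb₂ hb₃).mp h23
  have k34 : c₃ * b₄ < c₄ * b₃ := (div_lt_div_iff₀ hb₃ hb₄).mp h34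
  have k13 : c₁ * b₃ < c₃ * b₁ := (div_lt_div_iff₀ hb₁ hb₃).mp (h12.trans h23)
  have k24 : c₂ * b₄ < c₄ * b₂ := (div_lt_div_iff₀ hb₂ hb₄).mp (h23.trans h34)
  -- decompositions of the four iota0 values
  have eQ : iota0 (c₁ + c₂ + c₃ + c₄) (b₁ + b₂ + b₃ + b₄) (c₁ + c₃) (b₁ + b₃)
      = ((c₁+c₃) * Real.log ((c₁+c₃) / ((c₁+c₃) + (b₁+b₃)))
          + (b₁+b₃) * Real.log ((b₁+b₃) / ((c₁+c₃) + (b₁+b₃))))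
        + ((c₂+c₄) * Real.log ((c₂+c₄) / ((c₂+c₄) + (b₂+b₄)))
          + (b₂+b₄) * Real.log ((b₂+b₄) / ((c₂+c₄) + (b₂+b₄)))) := by
    simp only [iota0]
    rw [show (c₁ + c₂ + c₃ + c₄) - (c₁ + c₃) = c₂ + c₄ from by ring,
       show (b₁ + b₂ + b₃ + b₄) - (b₁ + b₃) = b₂ + b₄ from by ring]
    ring
  have e1 : iota0 (c₁ + c₂ + c₃ + c₄) (b₁ + b₂ + b₃ + b₄) c₁ b₁
      = (c₁ * Real.log (c₁ / (c₁ + b₁)) + b₁ * Real.log (b₁ / (c₁ + b₁)))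
        + ((c₂+c₃+c₄) * Real.log ((c₂+c₃+c₄) / ((c₂+c₃+c₄) + (b₂+b₃+b₄)))
          + (b₂+b₃+b₄) * Real.log ((b₂+b₃+b₄) / ((c₂+c₃+c₄) + (b₂+b₃+b₄)))) := by
    simp only [iota0]
    rw [show (c₁ + c₂ + c₃ + c₄) - c₁ = c₂ + c₃ + c₄ from by ring,
       show (b₁ + b₂ + b₃ + b₄) - b₁ = b₂ + b₃ + b₄ from by ring]
    ring
  have e2 : iota0 (c₁ + c₂ + c₃ + c₄) (b₁ + b₂ + b₃ + b₄) (c₁ + c₂) (b₁ + b₂)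
      = ((c₁+c₂) * Real.log ((c₁+c₂) / ((c₁+c₂) + (b₁+b₂)))
          + (b₁+b₂) * Real.log ((b₁+b₂) / ((c₁+c₂) + (b₁+b₂))))
        + ((c₃+c₄) * Real.log ((c₃+c₄) / ((c₃+c₄) + (b₃+b₄)))
          + (b₃+b₄) * Real.log ((b₃+b₄) / ((c₃+c₄) + (b₃+b₄)))) := by
    simp only [iota0]
    rw [show (c₁ + c₂ + c₃ + c₄) - (c₁ + c₂) = c₃ + c₄ from by ring,
       show (b₁ + b₂ + b₃ + b₄) - (b₁ + b₂) = b₃ + b₄ from by ring]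
    ring
  have e3 : iota0 (c₁ + c₂ + c₃ + c₄) (b₁ + b₂ + b₃ + b₄) (c₁ + c₂ + c₃) (b₁ + b₂ + b₃)
      = ((c₁+c₂+c₃) * Real.log ((c₁+c₂+c₃) / ((c₁+c₂+c₃) + (b₁+b₂+b₃)))
          + (b₁+b₂+b₃) * Real.log ((b₁+b₂+b₃) / ((c₁+c₂+c₃) + (b₁+b₂+b₃))))
        + (c₄ * Real.log (c₄ / (c₄ + b₄)) + b₄ * Real.log (b₄ / (c₄ + b₄))) := by
    simp only [iota0]
    rw [show (c₁ + c₂ + c₃ + c₄) - (c₁ + c₂ + c₃) = c₄ from by ring,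
       show (b₁ + b₂ + b₃ + b₄) - (b₁ + b₂ + b₃) = b₄ from by ring]
    ring
  -- Gibbs bounds
  have G1a := gibbs_lt c₁ b₁ (c₁+c₃) (b₁+b₃) hc₁ hb₁ (by linarith) (by linarith)
    (ne_of_lt (by nlinarith [k13]) : c₁ * (b₁+b₃) ≠ b₁ * (c₁+c₃))
  have G1b := gibbs_le (c₂+c₃+c₄) (b₂+b₃+b₄) (c₂+c₄) (b₂+b₄)
    (by linarith) (by linarith) (by linarith) (by linarith)
  have G2a := gibbs_le (c₁+c₂) (b₁+b₂) (c₂+c₄) (b₂+b₄)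
    (by linarith) (by linarith) (by linarith) (by linarith)
  have G2b := gibbs_le (c₃+c₄) (b₃+b₄) (c₁+c₃) (b₁+b₃)
    (by linarith) (by linarith) (by linarith) (by linarith)
  have G3a := gibbs_le (c₁+c₂+c₃) (b₁+b₂+b₃) (c₁+c₃) (b₁+b₃)
    (by linarith) (by linarith) (by linarith) (by linarith)
  have G3b := gibbs_lt c₄ b₄ (c₂+c₄) (b₂+b₄) hc₄ hb₄ (by linarith) (by linarith)
    (ne_of_gt (by nlinarith [k24]) : c₄ * (b₂+b₄) ≠ b₄ * (c₂+c₄))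
  refine core_alg c₁ b₁ c₂ b₂ c₃ b₃ c₄ b₄
    (Real.log ((c₁+c₃) / ((c₁+c₃) + (b₁+b₃)))) (Real.log ((b₁+b₃) / ((c₁+c₃) + (b₁+b₃))))
    (Real.log ((c₂+c₄) / ((c₂+c₄) + (b₂+b₄)))) (Real.log ((b₂+b₄) / ((c₂+c₄) + (b₂+b₄))))
    _ _ _ _ hb₁ hb₂ hb₃ hb₄ k12 k23 k34 (by rw [eQ]) ?_ ?_ ?_
  · rw [e1]
    exact add_lt_add_of_lt_of_le G1a G1b
  · rw [e2]
    exact add_le_add G2a G2b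
  · rw [e3]
    exact add_lt_add_of_le_of_lt G3a G3b
end

section
/- Optimality of a consecutive partition for binary-input channel quantization: when the I channel outputs are sorted so that P(1|1)/P(1|2) < P(2|1)/P(2|2) < ⋯ < P(I|1)/P(I|2), every quantizer maximizing I(X;Z) over deterministic K-level quantizers partitions {1,…,I} into K intervals of consecutive outputs. -/
open Finset Real

/-- Mutual information of the channel induced by a deterministic quantizer
`f : Fin I → Fin K`, with `T k j = ∑_{i : f i = k} P i j`. -/
noncomputable def quantMI (I K : ℕ) (p : Fin 2 → ℝ) (P : Fin I → Fin 2 → ℝ)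
    (f : Fin I → Fin K) : ℝ :=
  ∑ k, ∑ j, p j * (∑ i ∈ Finset.univ.filter fun i => f i = k, P i j) *
    Real.log ((∑ i ∈ Finset.univ.filter fun i => f i = k, P i j) /
      ∑ j', p j' * (∑ i ∈ Finset.univ.filter fun i => f i = k, P i j'))

noncomputable def Fq (p0 p1 a b : ℝ) : ℝ :=
  p0 * a * Real.log (a / (p0 * a + p1 * b)) + p1 * b * Real.log (b / (p0 * a + p1 * b))

noncomputable def cellS (I K : ℕ) (P : Fin I → Fin 2 → ℝ) (f : Fin I → Fin K)
    (k : Fin K) (j : Fin 2) : ℝ :=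
  ∑ i ∈ Finset.univ.filter fun i => f i = k, P i j

noncomputable def gr (I K : ℕ) (p : Fin 2 → ℝ) (P : Fin I → Fin 2 → ℝ) (f : Fin I → Fin K)
    (k : Fin K) (j : Fin 2) : ℝ :=
  p j * Real.log (cellS I K P f k j / (p 0 * cellS I K P f k 0 + p 1 * cellS I K P f k 1))

lemma quantMI_eq (I K : ℕ) (p : Fin 2 → ℝ) (P : Fin I → Fin 2 → ℝ) (f : Fin I → Fin K) :
    quantMI I K p P f = ∑ k, Fq (p 0) (p 1) (cellS I K P f k 0) (cellS I K P f k 1) := by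
  unfold quantMI Fq cellS
  refine Finset.sum_congr rfl fun k _ => ?_
  simp only [Fin.sum_univ_two]

lemma cellS_pos (I K : ℕ) (P : Fin I → Fin 2 → ℝ) (hPpos : ∀ i j, 0 < P i j)
    (f : Fin I → Fin K) (hf : Function.Surjective f) (k : Fin K) (j : Fin 2) :
    0 < cellS I K P f k j := by
  obtain ⟨i, hi⟩ := hf k
  exact Finset.sum_pos (fun i _ => hPpos i j) ⟨i, by simp [hi]⟩

lemma cellS_update_old (I K : ℕ) (P : Fin I → Fin 2 → ℝ) (f : Fin I → Fin K)
    (i₀ : Fin I) (k'' : Fin K) (hk : f i₀ ≠ k'') (j : Fin 2) :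
    cellS I K P (Function.update f i₀ k'') (f i₀) j = cellS I K P f (f i₀) j - P i₀ j := by
  unfold cellS
  have hset : (Finset.univ.filter fun i => Function.update f i₀ k'' i = f i₀)
      = (Finset.univ.filter fun i => f i = f i₀).erase i₀ := by
    ext i
    simp only [Finset.mem_filter, Finset.mem_univ, true_and, Finset.mem_erase]
    rcases eq_or_ne i i₀ with rfl | h
    · simp [Function.update_self, Ne.symm hk]
    · simp [Function.update_of_ne h, h]
  rw [hset]
  have := Finset.sum_erase_add (Finset.univ.filter fun i => f i = f i₀) (fun i => P i j)
    (show i₀ ∈ _ by simp)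
  linarith

lemma cellS_update_new (I K : ℕ) (P : Fin I → Fin 2 → ℝ) (f : Fin I → Fin K)
    (i₀ : Fin I) (k'' : Fin K) (hk : f i₀ ≠ k'') (j : Fin 2) :
    cellS I K P (Function.update f i₀ k'') k'' j = cellS I K P f k'' j + P i₀ j := by
  unfold cellS
  have hset : (Finset.univ.filter fun i => Function.update f i₀ k'' i = k'')
      = insert i₀ (Finset.univ.filter fun i => f i = k'') := by
    ext i
    simp only [Finset.mem_filter, Finset.mem_univ, true_and, Finset.mem_insert]
    rcases eq_or_ne i i₀ with rfl | h
    · simp [Function.update_self]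
    · simp [Function.update_of_ne h, h]
  rw [hset, Finset.sum_insert (by simp [hk])]
  ring

lemma cellS_update_other (I K : ℕ) (P : Fin I → Fin 2 → ℝ) (f : Fin I → Fin K)
    (i₀ : Fin I) (k'' : Fin K) (m : Fin K) (hm1 : m ≠ f i₀) (hm2 : m ≠ k'') (j : Fin 2) :
    cellS I K P (Function.update f i₀ k'') m j = cellS I K P f m j := by
  unfold cellS
  congr 1
  ext i
  simp only [Finset.mem_filter, Finset.mem_univ, true_and]
  rcases eq_or_ne i i₀ with rfl | h
  · simp [Function.update_self, Ne.symm hm2, Ne.symm hm1]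
  · simp [Function.update_of_ne h]

lemma sum_sub_two {K : ℕ} (φ ψ : Fin K → ℝ) (k k' : Fin K) (hkk : k ≠ k')
    (h : ∀ m, m ≠ k → m ≠ k' → φ m = ψ m) :
    (∑ m, φ m) - (∑ m, ψ m) = (φ k + φ k') - (ψ k + ψ k') := by
  have h1 : ∑ m ∈ ({k, k'} : Finset (Fin K)), (φ m - ψ m) = ∑ m, (φ m - ψ m) := by
    refine Finset.sum_subset (Finset.subset_univ _) ?_
    intro m _ hm
    simp only [Finset.mem_insert, Finset.mem_singleton, not_or] at hm
    rw [h m hm.1 hm.2]; ring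
  rw [Finset.sum_sub_distrib, Finset.sum_sub_distrib, Finset.sum_pair hkk,
    Finset.sum_pair hkk] at h1
  linarith

lemma update_surjective (I K : ℕ) (f : Fin I → Fin K) (hf : Function.Surjective f)
    (i₀ iw : Fin I) (hiw : iw ≠ i₀) (hfw : f iw = f i₀) (k'' : Fin K) :
    Function.Surjective (Function.update f i₀ k'') := by
  intro m
  by_cases hm : m = k''
  · exact ⟨i₀, by simp [hm]⟩
  · obtain ⟨i, hi⟩ := hf m
    rcases eq_or_ne i i₀ with rfl | h
    · exact ⟨iw, by rw [Function.update_of_ne hiw, hfw, hi]⟩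
    · exact ⟨i, by rw [Function.update_of_ne h, hi]⟩

lemma quantMI_update (I K : ℕ) (p : Fin 2 → ℝ) (P : Fin I → Fin 2 → ℝ) (f : Fin I → Fin K)
    (i₀ : Fin I) (k'' : Fin K) (hk : f i₀ ≠ k'') :
    quantMI I K p P (Function.update f i₀ k'') - quantMI I K p P f
      = Fq (p 0) (p 1) (cellS I K P f (f i₀) 0 - P i₀ 0) (cellS I K P f (f i₀) 1 - P i₀ 1)
        + Fq (p 0) (p 1) (cellS I K P f k'' 0 + P i₀ 0) (cellS I K P f k'' 1 + P i₀ 1)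
        - Fq (p 0) (p 1) (cellS I K P f (f i₀) 0) (cellS I K P f (f i₀) 1)
        - Fq (p 0) (p 1) (cellS I K P f k'' 0) (cellS I K P f k'' 1) := by
  rw [quantMI_eq, quantMI_eq]
  rw [sum_sub_two _ _ (f i₀) k'' hk (fun m h1 h2 => by
    rw [cellS_update_other I K P f i₀ k'' m h1 h2 0,
        cellS_update_other I K P f i₀ k'' m h1 h2 1])]
  rw [cellS_update_old I K P f i₀ k'' hk 0, cellS_update_old I K P f i₀ k'' hk 1,
      cellS_update_new I K P f i₀ k'' hk 0, cellS_update_new I K P f i₀ k'' hk 1]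
  ring



lemma fq_euler (p0 p1 a b : ℝ) :
    Fq p0 p1 a b = a * (p0 * Real.log (a / (p0 * a + p1 * b)))
      + b * (p1 * Real.log (b / (p0 * a + p1 * b))) := by
  unfold Fq; ring

lemma log_diff_ge {u v : ℝ} (hu : 0 < u) (hv : 0 < v) :
    1 - u / v ≤ Real.log v - Real.log u := by
  have h := Real.log_le_sub_one_of_pos (div_pos hu hv)
  rw [Real.log_div hu.ne' hv.ne'] at h
  linarith

lemma log_diff_gt {u v : ℝ} (hu : 0 < u) (hv : 0 < v) (hne : u ≠ v) :
    1 - u / v < Real.log v - Real.log u := by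
  have h1 : u / v ≠ 1 := fun h => hne ((div_eq_one_iff_eq hv.ne').mp h)
  have h := Real.log_lt_sub_one_of_pos (div_pos hu hv) h1
  rw [Real.log_div hu.ne' hv.ne'] at h
  linarith

lemma fact2_ge (p0 p1 a b a' b' : ℝ) (hp0 : 0 < p0) (hp1 : 0 < p1) (ha : 0 < a) (hb : 0 < b)
    (ha' : 0 < a') (hb' : 0 < b') :
    a' * (p0 * Real.log (a / (p0 * a + p1 * b))) + b' * (p1 * Real.log (b / (p0 * a + p1 * b)))
      ≤ Fq p0 p1 a' b' := by
  have hc : 0 < p0 * a + p1 * b := by positivity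
  have hc' : 0 < p0 * a' + p1 * b' := by positivity
  have h1 := log_diff_ge (div_pos ha hc) (div_pos ha' hc')
  have h2 := log_diff_ge (div_pos hb hc) (div_pos hb' hc')
  have e1 := mul_le_mul_of_nonneg_left h1 (show (0:ℝ) ≤ p0 * a' by positivity)
  have e2 := mul_le_mul_of_nonneg_left h2 (show (0:ℝ) ≤ p1 * b' by positivity)
  have hzero : p0 * a' * (1 - (a / (p0 * a + p1 * b)) / (a' / (p0 * a' + p1 * b')))
      + p1 * b' * (1 - (b / (p0 * a + p1 * b)) / (b' / (p0 * a' + p1 * b'))) = 0 := by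
    field_simp
    ring
  unfold Fq
  nlinarith [e1, e2, hzero]

lemma fact2_gt (p0 p1 a b a' b' : ℝ) (hp0 : 0 < p0) (hp1 : 0 < p1) (ha : 0 < a) (hb : 0 < b)
    (ha' : 0 < a') (hb' : 0 < b') (hne : a' * b ≠ a * b') :
    a' * (p0 * Real.log (a / (p0 * a + p1 * b))) + b' * (p1 * Real.log (b / (p0 * a + p1 * b)))
      < Fq p0 p1 a' b' := by
  have hc : 0 < p0 * a + p1 * b := by positivity
  have hc' : 0 < p0 * a' + p1 * b' := by positivity
  have hne1 : a / (p0 * a + p1 * b) ≠ a' / (p0 * a' + p1 * b') := by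
    intro heq
    have h5 : a * (p0 * a' + p1 * b') = a' * (p0 * a + p1 * b) :=
      (div_eq_div_iff hc.ne' hc'.ne').mp heq
    have h6 : p1 * (a * b') = p1 * (a' * b) := by linear_combination h5
    exact hne (mul_left_cancel₀ hp1.ne' h6).symm
  have h1 := log_diff_gt (div_pos ha hc) (div_pos ha' hc') hne1
  have h2 := log_diff_ge (div_pos hb hc) (div_pos hb' hc')
  have e1 := mul_lt_mul_of_pos_left h1 (show (0:ℝ) < p0 * a' by positivity)
  have e2 := mul_le_mul_of_nonneg_left h2 (show (0:ℝ) ≤ p1 * b' by positivity)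
  have hzero : p0 * a' * (1 - (a / (p0 * a + p1 * b)) / (a' / (p0 * a' + p1 * b')))
      + p1 * b' * (1 - (b / (p0 * a + p1 * b)) / (b' / (p0 * a' + p1 * b'))) = 0 := by
    field_simp
    ring
  unfold Fq
  nlinarith [e1, e2, hzero]

lemma key_move (I K : ℕ) (p : Fin 2 → ℝ) (hp : ∀ j, 0 < p j) (P : Fin I → Fin 2 → ℝ)
    (hPpos : ∀ i j, 0 < P i j) (f : Fin I → Fin K) (hf : Function.Surjective f)
    (hopt : ∀ g : Fin I → Fin K, Function.Surjective g →
      quantMI I K p P g ≤ quantMI I K p P f)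
    (i₀ iw : Fin I) (hiw : iw ≠ i₀) (hfw : f iw = f i₀) (k'' : Fin K) (hk : f i₀ ≠ k'') :
    P i₀ 0 * (gr I K p P f k'' 0 - gr I K p P f (f i₀) 0)
      + P i₀ 1 * (gr I K p P f k'' 1 - gr I K p P f (f i₀) 1) ≤ 0 ∧
    (P i₀ 0 * (gr I K p P f k'' 0 - gr I K p P f (f i₀) 0)
      + P i₀ 1 * (gr I K p P f k'' 1 - gr I K p P f (f i₀) 1) = 0 →
      P i₀ 0 * cellS I K P f k'' 1 = cellS I K P f k'' 0 * P i₀ 1) := by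
  have hgs : Function.Surjective (Function.update f i₀ k'') :=
    update_surjective I K f hf i₀ iw hiw hfw k''
  have hle : quantMI I K p P (Function.update f i₀ k'') ≤ quantMI I K p P f :=
    hopt _ hgs
  have hΔ := quantMI_update I K p P f i₀ k'' hk
  have hA0 := cellS_pos I K P hPpos f hf (f i₀) 0
  have hA1 := cellS_pos I K P hPpos f hf (f i₀) 1
  have hB0 := cellS_pos I K P hPpos f hf k'' 0
  have hB1 := cellS_pos I K P hPpos f hf k'' 1
  have hA0' : 0 < cellS I K P f (f i₀) 0 - P i₀ 0 := by
    have h := cellS_pos I K P hPpos _ hgs (f i₀) 0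
    rwa [cellS_update_old I K P f i₀ k'' hk 0] at h
  have hA1' : 0 < cellS I K P f (f i₀) 1 - P i₀ 1 := by
    have h := cellS_pos I K P hPpos _ hgs (f i₀) 1
    rwa [cellS_update_old I K P f i₀ k'' hk 1] at h
  have hB0' : 0 < cellS I K P f k'' 0 + P i₀ 0 := by have := hPpos i₀ 0; linarith
  have hB1' : 0 < cellS I K P f k'' 1 + P i₀ 1 := by have := hPpos i₀ 1; linarith
  have hb1 := fact2_ge (p 0) (p 1) (cellS I K P f (f i₀) 0) (cellS I K P f (f i₀) 1)
    (cellS I K P f (f i₀) 0 - P i₀ 0) (cellS I K P f (f i₀) 1 - P i₀ 1)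
    (hp 0) (hp 1) hA0 hA1 hA0' hA1'
  have hb2 := fact2_ge (p 0) (p 1) (cellS I K P f k'' 0) (cellS I K P f k'' 1)
    (cellS I K P f k'' 0 + P i₀ 0) (cellS I K P f k'' 1 + P i₀ 1)
    (hp 0) (hp 1) hB0 hB1 hB0' hB1'
  have heA := fq_euler (p 0) (p 1) (cellS I K P f (f i₀) 0) (cellS I K P f (f i₀) 1)
  have heB := fq_euler (p 0) (p 1) (cellS I K P f k'' 0) (cellS I K P f k'' 1)
  constructor
  · simp only [gr]
    nlinarith [hb1, hb2, heA, heB, hΔ, hle]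
  · intro h0
    by_contra hne2
    have hne3 : (cellS I K P f k'' 0 + P i₀ 0) * cellS I K P f k'' 1
        ≠ cellS I K P f k'' 0 * (cellS I K P f k'' 1 + P i₀ 1) := by
      intro hh; exact hne2 (by linear_combination hh)
    have hb2' := fact2_gt (p 0) (p 1) (cellS I K P f k'' 0) (cellS I K P f k'' 1)
      (cellS I K P f k'' 0 + P i₀ 0) (cellS I K P f k'' 1 + P i₀ 1)
      (hp 0) (hp 1) hB0 hB1 hB0' hB1' hne3
    simp only [gr] at h0
    nlinarith [hb1, hb2', heA, heB, hΔ, hle, h0]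

lemma final_algebra (x1 y1 x2 y2 x3 y3 B0 B1 u1 u2 w1 w2 : ℝ)
    (hy1 : 0 < y1) (hy2 : 0 < y2) (hy3 : 0 < y3) (hB1 : 0 < B1)
    (H1 : x1 * (w1 - u1) + y1 * (w2 - u2) ≤ 0)
    (H3 : x3 * (w1 - u1) + y3 * (w2 - u2) ≤ 0)
    (H2 : x2 * (u1 - w1) + y2 * (u2 - w2) ≤ 0)
    (E1 : x1 * (w1 - u1) + y1 * (w2 - u2) = 0 → x1 * B1 = B0 * y1)
    (E3 : x3 * (w1 - u1) + y3 * (w2 - u2) = 0 → x3 * B1 = B0 * y3)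
    (s12 : x1 * y2 < x2 * y1) (s23 : x2 * y3 < x3 * y2) (s13 : x1 * y3 < x3 * y1) :
    False := by
  have t1 : 0 ≤ (-(x1 * (w1 - u1) + y1 * (w2 - u2))) * y2 := mul_nonneg (by linarith) hy2.le
  have t2 : 0 ≤ (x2 * (w1 - u1) + y2 * (w2 - u2)) * y1 := mul_nonneg (by linarith) hy1.le
  have t3 : 0 ≤ (x2 * (w1 - u1) + y2 * (w2 - u2)) * y3 := mul_nonneg (by linarith) hy3.le
  have t4 : 0 ≤ (-(x3 * (w1 - u1) + y3 * (w2 - u2))) * y2 := mul_nonneg (by linarith) hy2.le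
  have hD1ge : 0 ≤ w1 - u1 := by nlinarith [t1, t2, s12]
  have hD1le : w1 - u1 ≤ 0 := by nlinarith [t3, t4, s23]
  have hD1 : w1 - u1 = 0 := le_antisymm hD1le hD1ge
  have hD1' : u1 - w1 = 0 := by linarith
  have hD2le : w2 - u2 ≤ 0 := by nlinarith [H1, hy1, mul_eq_zero_of_right x1 hD1]
  have hD2ge : 0 ≤ w2 - u2 := by nlinarith [H2, hy2, mul_eq_zero_of_right x2 hD1']
  have hD2 : w2 - u2 = 0 := le_antisymm hD2le hD2ge
  have e1 := E1 (by rw [hD1, hD2]; ring)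
  have e3 := E3 (by rw [hD1, hD2]; ring)
  have c : x1 * y3 * B1 = x3 * y1 * B1 := by linear_combination y3 * e1 - y1 * e3
  have : x1 * y3 = x3 * y1 := mul_right_cancel₀ (ne_of_gt hB1) c
  linarith

/-- When the channel outputs are sorted by strictly increasing likelihood ratios,
every deterministic `K`-level quantizer maximizing `I(X;Z)` has preimages consisting
of consecutive outputs, i.e. it partitions the outputs into `K` intervals. -/
theorem optimal_quantizer_consecutive (I K : ℕ) (p : Fin 2 → ℝ)
    (hp : ∀ j, 0 < p j) (hpsum : ∑ j, p j = 1)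
    (P : Fin I → Fin 2 → ℝ) (hPpos : ∀ i j, 0 < P i j) (hPsum : ∀ j, ∑ i, P i j = 1)
    (hsort : ∀ i i' : Fin I, i < i' → P i 0 / P i 1 < P i' 0 / P i' 1)
    (f : Fin I → Fin K) (hf : Function.Surjective f)
    (hopt : ∀ g : Fin I → Fin K, Function.Surjective g →
      quantMI I K p P g ≤ quantMI I K p P f) :
    ∀ i₁ i₂ i₃ : Fin I, i₁ ≤ i₂ → i₂ ≤ i₃ → f i₁ = f i₃ → f i₂ = f i₁ := by
  intro i₁ i₂ i₃ h12 h23 h13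
  by_contra hne
  have hne' : f i₁ ≠ f i₂ := fun h => hne h.symm
  have h12' : i₁ < i₂ := lt_of_le_of_ne h12 (by rintro rfl; exact hne rfl)
  have h23' : i₂ < i₃ := lt_of_le_of_ne h23 (by rintro rfl; exact hne h13.symm)
  have h13' : i₁ < i₃ := h12'.trans h23'
  obtain ⟨H1, E1⟩ := key_move I K p hp P hPpos f hf hopt i₁ i₃ h13'.ne' h13.symm (f i₂) hne'
  have hki3 : f i₃ ≠ f i₂ := by rw [← h13]; exact hne'
  obtain ⟨H3, E3⟩ := key_move I K p hp P hPpos f hf hopt i₃ i₁ h13'.ne h13 (f i₂) hki3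
  rw [← h13] at H3 E3
  have H2 : P i₂ 0 * (gr I K p P f (f i₁) 0 - gr I K p P f (f i₂) 0)
      + P i₂ 1 * (gr I K p P f (f i₁) 1 - gr I K p P f (f i₂) 1) ≤ 0 := by
    by_cases hsing : ∃ i₄, i₄ ≠ i₂ ∧ f i₄ = f i₂
    · obtain ⟨i₄, hi₄, hfi₄⟩ := hsing
      exact (key_move I K p hp P hPpos f hf hopt i₂ i₄ hi₄ hfi₄ (f i₁) hne).1
    · push_neg at hsing
      have hcell : ∀ j, cellS I K P f (f i₂) j = P i₂ j := by
        intro j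
        unfold cellS
        have hseteq : (Finset.univ.filter fun i => f i = f i₂) = {i₂} := by
          ext i
          simp only [Finset.mem_filter, Finset.mem_univ, true_and, Finset.mem_singleton]
          constructor
          · intro h; by_contra hcon; exact hsing i hcon h
          · rintro rfl; rfl
        rw [hseteq, Finset.sum_singleton]
      have hA0 := cellS_pos I K P hPpos f hf (f i₁) 0
      have hA1 := cellS_pos I K P hPpos f hf (f i₁) 1
      have hfge := fact2_ge (p 0) (p 1) (cellS I K P f (f i₁) 0) (cellS I K P f (f i₁) 1)
        (P i₂ 0) (P i₂ 1) (hp 0) (hp 1) hA0 hA1 (hPpos i₂ 0) (hPpos i₂ 1)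
      have heu := fq_euler (p 0) (p 1) (P i₂ 0) (P i₂ 1)
      simp only [gr, hcell]
      nlinarith [hfge, heu]
  have s12 : P i₁ 0 * P i₂ 1 < P i₂ 0 * P i₁ 1 :=
    (div_lt_div_iff₀ (hPpos i₁ 1) (hPpos i₂ 1)).mp (hsort _ _ h12')
  have s23 : P i₂ 0 * P i₃ 1 < P i₃ 0 * P i₂ 1 :=
    (div_lt_div_iff₀ (hPpos i₂ 1) (hPpos i₃ 1)).mp (hsort _ _ h23')
  have s13 : P i₁ 0 * P i₃ 1 < P i₃ 0 * P i₁ 1 :=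
    (div_lt_div_iff₀ (hPpos i₁ 1) (hPpos i₃ 1)).mp (hsort _ _ h13')
  exact final_algebra (P i₁ 0) (P i₁ 1) (P i₂ 0) (P i₂ 1) (P i₃ 0) (P i₃ 1)
    (cellS I K P f (f i₂) 0) (cellS I K P f (f i₂) 1)
    (gr I K p P f (f i₁) 0) (gr I K p P f (f i₁) 1)
    (gr I K p P f (f i₂) 0) (gr I K p P f (f i₂) 1)
    (hPpos i₁ 1) (hPpos i₂ 1) (hPpos i₃ 1)
    (cellS_pos I K P hPpos f hf (f i₂) 1)
    H1 H3 H2 E1 E3 s12 s23 s13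
end
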